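/- Let π : ℝⁿ × ℝᵖ → ℝᵐ be a C¹ policy, and with f, r C¹, fix x₀ ∈ ℝⁿ and define for each w ∈ ℝᵖ the trajectory x₀(w) = x₀, a_t(w) = π(x_t(w), w), x_{t+1}(w) = f(x_t(w), a_t(w)), and the total reward J(w) = Σ_{t=0}^{F−1} γᵗ r(x_t(w), a_t(w)). Define the value-to-go functions V_t : ℝⁿ × ℝᵖ → ℝ by V_F(x, w) = 0 and V_t(x, w) = r(x, π(x, w)) + γ V_{t+1}(f(x, π(x, w)), w). Then J is differentiable and its gradient satisfies ∇_w J(w) = Σ_{t=0}^{F−1} γᵗ (D_w π(x_t(w), w))ᵀ ( ∇_a r(x_t(w), a_t(w)) + γ (D_a f(x_t(w), a_t(w)))ᵀ ∇_x V_{t+1}(x_{t+1}(w), w) ). -/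

import Mathlib

open Matrix

/-- Gradient of a scalar function, as a vector of partial derivatives. -/
noncomputable def grad {k : ℕ} (g : (Fin k → ℝ) → ℝ) (x : Fin k → ℝ) : Fin k → ℝ :=
  fun i => fderiv ℝ g x (Pi.single i 1)

/-- Gradient of `r` in the action variable. -/
noncomputable def gradA {n m : ℕ} (r : (Fin n → ℝ) × (Fin m → ℝ) → ℝ)
    (x : Fin n → ℝ) (a : Fin m → ℝ) : Fin m → ℝ :=
  fun i => fderiv ℝ (fun b => r (x, b)) a (Pi.single i 1)

/-- Jacobian of `f` in the action variable (rows indexed by output components). -/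
noncomputable def jacA {n m : ℕ} (f : (Fin n → ℝ) × (Fin m → ℝ) → Fin n → ℝ)
    (x : Fin n → ℝ) (a : Fin m → ℝ) : Matrix (Fin n) (Fin m) ℝ :=
  Matrix.of fun j i => fderiv ℝ (fun b => f (x, b) j) a (Pi.single i 1)

/-- Jacobian of the policy `π` in the weight variable (an `m × p` matrix). -/
noncomputable def jacWpi {n m p : ℕ}
    (π : (Fin n → ℝ) × (Fin p → ℝ) → Fin m → ℝ)
    (x : Fin n → ℝ) (w : Fin p → ℝ) : Matrix (Fin m) (Fin p) ℝ :=
  Matrix.of fun j i => fderiv ℝ (fun w' => π (x, w') j) w (Pi.single i 1)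

lemma lin_expand {k : ℕ} (L : (Fin k → ℝ) →L[ℝ] ℝ) (v : Fin k → ℝ) :
    L v = ∑ i, v i * L (Pi.single i 1) := by
  have hv : v = ∑ i, v i • (Pi.single i 1 : Fin k → ℝ) := by
    funext j
    simp [Finset.sum_apply, Pi.single_apply]
  conv_lhs => rw [hv]
  simp [smul_eq_mul]

lemma comp_proj_fderiv {E : Type*} [NormedAddCommGroup E] [NormedSpace ℝ E]
    {l : ℕ} {φ : E → (Fin l → ℝ)} {w : E} (h : DifferentiableAt ℝ φ w)
    (j : Fin l) (v : E) :
    fderiv ℝ (fun w' => φ w' j) w v = fderiv ℝ φ w v j := by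
  have H : HasFDerivAt (fun w' => φ w' j)
      ((ContinuousLinearMap.proj j).comp (fderiv ℝ φ w)) w :=
    (ContinuousLinearMap.proj (R := ℝ) (φ := fun _ : Fin l => ℝ) j).hasFDerivAt.comp w h.hasFDerivAt
  rw [H.fderiv]; rfl

lemma fderiv_partial_right {E F G : Type*} [NormedAddCommGroup E] [NormedSpace ℝ E]
    [NormedAddCommGroup F] [NormedSpace ℝ F] [NormedAddCommGroup G] [NormedSpace ℝ G]
    {g : E × F → G} {x : E} {a : F} (h : DifferentiableAt ℝ g (x, a)) (v : F) :
    fderiv ℝ (fun b => g (x, b)) a v = fderiv ℝ g (x, a) (0, v) := by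
  have H := h.hasFDerivAt.comp a (hasFDerivAt_prodMk_right x a)
  rw [show (fun b => g (x, b)) = g ∘ Prod.mk x from rfl, H.fderiv]; rfl

lemma fderiv_partial_left {E F G : Type*} [NormedAddCommGroup E] [NormedSpace ℝ E]
    [NormedAddCommGroup F] [NormedSpace ℝ F] [NormedAddCommGroup G] [NormedSpace ℝ G]
    {g : E × F → G} {x : E} {a : F} (h : DifferentiableAt ℝ g (x, a)) (v : E) :
    fderiv ℝ (fun y => g (y, a)) x v = fderiv ℝ g (x, a) (v, 0) := by
  have H := h.hasFDerivAt.comp (f := fun e : E => (e, a)) x (hasFDerivAt_prodMk_left (𝕜 := ℝ) x a)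
  rw [show (fun y => g (y, a)) = g ∘ (fun e => (e, a)) from rfl, H.fderiv]; rfl

lemma keyStep {n m p : ℕ} {γ : ℝ}
    {f : (Fin n → ℝ) × (Fin m → ℝ) → Fin n → ℝ}
    {r : (Fin n → ℝ) × (Fin m → ℝ) → ℝ}
    {π : (Fin n → ℝ) × (Fin p → ℝ) → Fin m → ℝ}
    (hf : ContDiff ℝ 1 f) (hr : ContDiff ℝ 1 r) (hπ : ContDiff ℝ 1 π)
    {W : (Fin n → ℝ) × (Fin p → ℝ) → ℝ} (hW : ContDiff ℝ 1 W)
    (x : Fin n → ℝ) (w : Fin p → ℝ) :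
    grad (fun w' => r (x, π (x, w')) + γ * W (f (x, π (x, w')), w')) w =
      (jacWpi π x w)ᵀ.mulVec
        (gradA r x (π (x, w)) +
          γ • (jacA f x (π (x, w)))ᵀ.mulVec
            (grad (fun y => W (y, w)) (f (x, π (x, w))))) +
      γ • grad (fun w' => W (f (x, π (x, w)), w')) w := by
  have hπd : Differentiable ℝ π := hπ.differentiable one_ne_zero
  have hfd : Differentiable ℝ f := hf.differentiable one_ne_zero
  have hrd : Differentiable ℝ r := hr.differentiable one_ne_zero
  have hWd : Differentiable ℝ W := hW.differentiable one_ne_zero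
  have hφ : Differentiable ℝ (fun w' => π (x, w')) :=
    hπd.comp ((differentiable_const x).prodMk differentiable_id)
  have hψ : Differentiable ℝ (fun b => f (x, b)) :=
    hfd.comp ((differentiable_const x).prodMk differentiable_id)
  set A := fderiv ℝ (fun w' => π (x, w')) w with hAdef
  set Bf := fderiv ℝ (fun b => f (x, b)) (π (x, w)) with hBdef
  set Rr := fderiv ℝ r (x, π (x, w)) with hRdef
  set Lv := fderiv ℝ W (f (x, π (x, w)), w) with hLdef
  have hA : HasFDerivAt (fun w' => π (x, w')) A w := (hφ w).hasFDerivAt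
  have hB : HasFDerivAt (fun b => f (x, b)) Bf (π (x, w)) := (hψ _).hasFDerivAt
  have h1 : HasFDerivAt (fun w' => ((x, π (x, w')) : _ × _))
      ((0 : (Fin p → ℝ) →L[ℝ] (Fin n → ℝ)).prod A) w :=
    (hasFDerivAt_const x w).prodMk hA
  have h2 : HasFDerivAt (fun w' => r (x, π (x, w')))
      (Rr.comp ((0 : (Fin p → ℝ) →L[ℝ] (Fin n → ℝ)).prod A)) w :=
    (hrd (x, π (x, w))).hasFDerivAt.comp w h1
  have h3 : HasFDerivAt (fun w' => f (x, π (x, w'))) (Bf.comp A) w := hB.comp (f := fun w' => π (x, w')) w hA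
  have h4 : HasFDerivAt (fun w' => ((f (x, π (x, w')), w') : _ × _))
      ((Bf.comp A).prod (ContinuousLinearMap.id ℝ (Fin p → ℝ))) w :=
    h3.prodMk (hasFDerivAt_id w)
  have h5 : HasFDerivAt (fun w' => W (f (x, π (x, w')), w'))
      (Lv.comp ((Bf.comp A).prod (ContinuousLinearMap.id ℝ (Fin p → ℝ)))) w := by
    exact HasFDerivAt.comp (f := fun w' => ((f (x, π (x, w')), w') : _ × _)) w
      ((hWd (f (x, π (x, w)), w)).hasFDerivAt) h4
  have h6 := (h5.const_mul γ)
  have hG : HasFDerivAt (fun w' => r (x, π (x, w')) + γ * W (f (x, π (x, w')), w'))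
      (Rr.comp ((0 : (Fin p → ℝ) →L[ℝ] (Fin n → ℝ)).prod A) +
        γ • Lv.comp ((Bf.comp A).prod (ContinuousLinearMap.id ℝ (Fin p → ℝ)))) w :=
    h2.add h6
  -- component rewriting lemmas
  have E1 : ∀ (j : Fin m) (v : Fin p → ℝ),
      fderiv ℝ (fun w' => π (x, w') j) w v = A v j := fun j v =>
    comp_proj_fderiv (φ := fun w' => π (x, w')) (hφ w) j v
  have E2 : ∀ v : Fin m → ℝ, fderiv ℝ (fun b => r (x, b)) (π (x, w)) v = Rr (0, v) :=
    fun v => fderiv_partial_right (hrd _) v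
  have E3 : ∀ (k : Fin n) (v : Fin m → ℝ),
      fderiv ℝ (fun b => f (x, b) k) (π (x, w)) v = Bf v k := fun k v =>
    comp_proj_fderiv (φ := fun b => f (x, b)) (hψ _) k v
  have E4 : ∀ v : Fin n → ℝ,
      fderiv ℝ (fun y => W (y, w)) (f (x, π (x, w))) v = Lv (v, 0) :=
    fun v => fderiv_partial_left (hWd _) v
  have E5 : ∀ v : Fin p → ℝ,
      fderiv ℝ (fun w' => W (f (x, π (x, w)), w')) w v = Lv (0, v) :=
    fun v => fderiv_partial_right (hWd _) v
  have Sinl : ∀ v : Fin n → ℝ, Lv (v, 0) = ∑ k, v k * Lv (Pi.single k 1, 0) := fun v => by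
    simpa using lin_expand (Lv.comp (ContinuousLinearMap.inl ℝ (Fin n → ℝ) (Fin p → ℝ))) v
  have Scomb : ∀ v : Fin m → ℝ,
      Rr (0, v) + γ * Lv (Bf v, 0) =
        ∑ j, v j * (Rr (0, Pi.single j 1) + γ * Lv (Bf (Pi.single j 1), 0)) := fun v => by
    simpa [smul_eq_mul, mul_add] using lin_expand
      (Rr.comp (ContinuousLinearMap.inr ℝ (Fin n → ℝ) (Fin m → ℝ)) +
        γ • (Lv.comp (ContinuousLinearMap.inl ℝ (Fin n → ℝ) (Fin p → ℝ))).comp Bf) v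
  funext i
  simp only [grad, gradA, jacA, jacWpi, Matrix.of_apply, Pi.add_apply, Pi.smul_apply,
    Matrix.mulVec, dotProduct, Matrix.transpose_apply, smul_eq_mul]
  rw [hG.fderiv]
  simp only [E1, E2, E3, E4, E5, ContinuousLinearMap.add_apply, ContinuousLinearMap.comp_apply,
    ContinuousLinearMap.prod_apply, ContinuousLinearMap.zero_apply, ContinuousLinearMap.coe_id',
    id_eq, ContinuousLinearMap.smul_apply, smul_eq_mul]
  rw [← Finset.sum_congr rfl (fun j _ => by rw [← Sinl (Bf (Pi.single j 1))])]
  rw [← Scomb (A (Pi.single i 1))]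
  have hsplit : Lv (Bf (A (Pi.single i 1)), Pi.single i 1) =
      Lv (Bf (A (Pi.single i 1)), 0) + Lv (0, Pi.single i 1) := by
    rw [← map_add]
    simp
  rw [hsplit]; ring

/-- The trajectory generated from `x₀` by the policy `π(·, w)`. -/
def trajW {n m p : ℕ} (f : (Fin n → ℝ) × (Fin m → ℝ) → Fin n → ℝ)
    (π : (Fin n → ℝ) × (Fin p → ℝ) → Fin m → ℝ)
    (x₀ : Fin n → ℝ) (w : Fin p → ℝ) : ℕ → Fin n → ℝ
  | 0 => x₀
  | t + 1 => f (trajW f π x₀ w t, π (trajW f π x₀ w t, w))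

/-- backpropagation through time: the policy gradient of the
total reward expands as the discounted sum over time of
`(D_w π)ᵀ ( ∇_a r + γ (D_a f)ᵀ ∇_x V_{t+1} )`. -/
theorem stmt12 {n m p : ℕ} (F : ℕ) (hF : 1 ≤ F) (γ : ℝ)
    (f : (Fin n → ℝ) × (Fin m → ℝ) → Fin n → ℝ)
    (r : (Fin n → ℝ) × (Fin m → ℝ) → ℝ)
    (hf : ContDiff ℝ 1 f) (hr : ContDiff ℝ 1 r)
    (π : (Fin n → ℝ) × (Fin p → ℝ) → Fin m → ℝ) (hπ : ContDiff ℝ 1 π)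
    (x₀ : Fin n → ℝ)
    (J : (Fin p → ℝ) → ℝ)
    (hJ : ∀ w, J w = ∑ t ∈ Finset.range F,
      γ ^ t * r (trajW f π x₀ w t, π (trajW f π x₀ w t, w)))
    (V : ℕ → (Fin n → ℝ) × (Fin p → ℝ) → ℝ)
    (hVF : ∀ x w, V F (x, w) = 0)
    (hVrec : ∀ t < F, ∀ x w, V t (x, w) =
      r (x, π (x, w)) + γ * V (t + 1) (f (x, π (x, w)), w)) :
    Differentiable ℝ J ∧
    ∀ w : Fin p → ℝ, grad J w =
      ∑ t ∈ Finset.range F, γ ^ t •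
        (jacWpi π (trajW f π x₀ w t) w)ᵀ.mulVec
          (gradA r (trajW f π x₀ w t) (π (trajW f π x₀ w t, w)) +
            γ • (jacA f (trajW f π x₀ w t) (π (trajW f π x₀ w t, w)))ᵀ.mulVec
              (grad (fun y => V (t + 1) (y, w)) (trajW f π x₀ w (t + 1)))) := by
  -- smoothness of the value functions
  have hVc1 : ∀ k t, t + k = F → ContDiff ℝ 1 (V t) := by
    intro k
    induction k with
    | zero =>
      intro t ht
      have htF : t = F := by omega
      rw [htF]
      have : V F = fun _ => (0 : ℝ) := funext fun q => hVF q.1 q.2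
      rw [this]; exact contDiff_const
    | succ k ih =>
      intro t ht
      have hVeq : V t = fun q : (Fin n → ℝ) × (Fin p → ℝ) =>
          r (q.1, π (q.1, q.2)) + γ * V (t + 1) (f (q.1, π (q.1, q.2)), q.2) :=
        funext fun q => hVrec t (by omega) q.1 q.2
      rw [hVeq]
      have hpq : ContDiff ℝ 1 (fun q : (Fin n → ℝ) × (Fin p → ℝ) => π (q.1, q.2)) :=
        hπ.comp (contDiff_fst.prodMk contDiff_snd)
      exact (hr.comp (contDiff_fst.prodMk hpq)).add
        (contDiff_const.mul ((ih (t + 1) (by omega)).comp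
          ((hf.comp (contDiff_fst.prodMk hpq)).prodMk contDiff_snd)))
  -- value along the trajectory equals discounted reward-to-go
  have hTV : ∀ k t, t + k = F → ∀ w, V t (trajW f π x₀ w t, w) =
      ∑ s ∈ Finset.range k, γ ^ s *
        r (trajW f π x₀ w (t + s), π (trajW f π x₀ w (t + s), w)) := by
    intro k
    induction k with
    | zero =>
      intro t ht w
      have htF : t = F := by omega
      rw [htF]
      simp [hVF]
    | succ k ih =>
      intro t ht w
      rw [hVrec t (by omega)]
      have htraj : f (trajW f π x₀ w t, π (trajW f π x₀ w t, w)) = trajW f π x₀ w (t + 1) := rfl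
      rw [htraj, ih (t + 1) (by omega) w, Finset.sum_range_succ']
      have harr : ∀ s : ℕ, t + 1 + s = t + (s + 1) := fun s => by omega
      simp only [harr, Nat.add_zero, pow_zero, one_mul, pow_succ',
        Finset.mul_sum, mul_assoc]
      ring
  -- backpropagated gradient along the trajectory
  have hL2 : ∀ k t, t + k = F → ∀ w,
      grad (fun w' => V t (trajW f π x₀ w t, w')) w =
      ∑ s ∈ Finset.range k, γ ^ s •
        (jacWpi π (trajW f π x₀ w (t + s)) w)ᵀ.mulVec
          (gradA r (trajW f π x₀ w (t + s)) (π (trajW f π x₀ w (t + s), w)) +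
            γ • (jacA f (trajW f π x₀ w (t + s)) (π (trajW f π x₀ w (t + s), w)))ᵀ.mulVec
              (grad (fun y => V (t + s + 1) (y, w)) (trajW f π x₀ w (t + s + 1)))) := by
    intro k
    induction k with
    | zero =>
      intro t ht w
      have htF : t = F := by omega
      rw [htF]
      have hfun : (fun w' => V F (trajW f π x₀ w F, w')) = fun _ => (0 : ℝ) :=
        funext fun w' => hVF _ w'
      rw [hfun]
      funext i
      simp [grad]
    | succ k ih =>
      intro t ht w
      have hfun : (fun w' => V t (trajW f π x₀ w t, w')) = fun w' =>
          r (trajW f π x₀ w t, π (trajW f π x₀ w t, w')) +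
            γ * V (t + 1) (f (trajW f π x₀ w t, π (trajW f π x₀ w t, w')), w') :=
        funext fun w' => hVrec t (by omega) _ w'
      rw [hfun, keyStep hf hr hπ (hVc1 k (t + 1) (by omega)) (trajW f π x₀ w t) w]
      have htraj : f (trajW f π x₀ w t, π (trajW f π x₀ w t, w)) = trajW f π x₀ w (t + 1) := rfl
      rw [htraj, ih (t + 1) (by omega) w, Finset.sum_range_succ']
      have harr : ∀ s : ℕ, t + 1 + s = t + (s + 1) := fun s => by omega
      simp only [harr, Nat.add_zero, pow_zero, one_smul, pow_succ', Finset.smul_sum,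
        smul_smul]
      rw [add_comm]
  -- J is the value function at time 0
  have hJV : J = fun w => V 0 (x₀, w) := by
    funext w
    rw [hJ w]
    have h := hTV F 0 (by omega) w
    simp only [Nat.zero_add] at h
    exact h.symm
  constructor
  · rw [hJV]
    exact ((hVc1 F 0 (by omega)).differentiable one_ne_zero).comp
      ((differentiable_const x₀).prodMk differentiable_id)
  · intro w
    rw [hJV]
    have := hL2 F 0 (by omega) w
    simp only [Nat.zero_add] at this
    exact this
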